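/- arXiv:2009.04831 — 3 statements merged into one kernel-verified Lean document; each statement's English description precedes it below -/
import Mathlib

section
/- Let G₁ be a finite connected graph that is not complete, and let G₂ be a finite graph with at least one vertex. Then the connectivity of the lexicographic product satisfies κ(G₁∘G₂) = κ(G₁)·|V(G₂)|. -/
/-- The lexicographic product of two simple graphs: `(x₁,y₁)` is adjacent to `(x₂,y₂)`
iff `x₁x₂` is an edge of `G`, or `x₁ = x₂` and `y₁y₂` is an edge of `H`. -/
def lexProd {V W : Type*} (G : SimpleGraph V) (H : SimpleGraph W) :
    SimpleGraph (V × W) where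
  Adj p q := G.Adj p.1 q.1 ∨ (p.1 = q.1 ∧ H.Adj p.2 q.2)
  symm := by
    constructor
    rintro ⟨x₁, y₁⟩ ⟨x₂, y₂⟩ (h | ⟨rfl, h⟩)
    · exact Or.inl h.symm
    · exact Or.inr ⟨rfl, h.symm⟩
  loopless := by
    constructor
    rintro ⟨x, y⟩ (h | ⟨-, h⟩)
    · exact G.irrefl h
    · exact H.irrefl h

/-- The set `V₀(G)` of isolated vertices of `G`. -/
def isoSet {V : Type*} (G : SimpleGraph V) : Set V := {v | ∀ w, ¬ G.Adj v w}

/-- The set of vertices of `G − S` that are isolated in `G − S`,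
i.e. `V₀(G − S)` regarded as a subset of the vertices of `G`. -/
def isolatedAfter {V : Type*} (G : SimpleGraph V) (S : Set V) : Set V :=
  {v | v ∉ S ∧ ∀ w ∉ S, ¬ G.Adj v w}

/-- `S` is a vertex-cut of `G`: deleting `S` leaves a disconnected graph, or reduces `G`
to the trivial one-vertex graph `K₁`. -/
def IsVertexCut {V : Type*} (G : SimpleGraph V) (S : Set V) : Prop :=
  (Sᶜ.Nonempty ∧ ¬ (G.induce Sᶜ).Connected) ∨ (∃ v, Sᶜ = {v})

/-- The connectivity `κ(G)`: the minimum cardinality of a vertex-cut of `G`. -/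
noncomputable def graphConnectivity {V : Type*} (G : SimpleGraph V) : ℕ :=
  sInf {n | ∃ S : Set V, IsVertexCut G S ∧ S.ncard = n}

/-- A minimum vertex-cut: a vertex-cut of cardinality `κ(G)`. -/
def IsMinVertexCut {V : Type*} (G : SimpleGraph V) (S : Set V) : Prop :=
  IsVertexCut G S ∧ S.ncard = graphConnectivity G

/-- A k₁-vertex-cut: a vertex-cut `S` such that `G − S` has no isolated vertices. -/
def IsK1VertexCut {V : Type*} (G : SimpleGraph V) (S : Set V) : Prop :=
  IsVertexCut G S ∧ ∀ v ∉ S, ∃ w ∉ S, G.Adj v w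

/-- The k₁-connectivity `k₁(G)`, valued in `ℕ∞`; it is `⊤` (infinity) if `G`
has no k₁-vertex-cut. -/
noncomputable def k1Connectivity {V : Type*} (G : SimpleGraph V) : ℕ∞ :=
  sInf {n : ℕ∞ | ∃ S : Set V, IsK1VertexCut G S ∧ (S.ncard : ℕ∞) = n}

/-- `G` is super connected if every minimum vertex-cut isolates a vertex,
i.e. some vertex of `G − S` has no neighbours in `G − S`. -/
def SuperConnected {V : Type*} (G : SimpleGraph V) : Prop :=
  ∀ S : Set V, IsMinVertexCut G S → ∃ v ∉ S, ∀ w ∉ S, ¬ G.Adj v w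

open Set

lemma my_ncard_prod {V W : Type*} (s : Set V) (t : Set W) :
    (s ×ˢ t).ncard = s.ncard * t.ncard := by
  rw [← Nat.card_coe_set_eq, ← Nat.card_coe_set_eq, ← Nat.card_coe_set_eq,
    Nat.card_congr (Equiv.Set.prod s t), Nat.card_prod]

lemma exists_adj_of_reachable {α : Type*} {G : SimpleGraph α} {a b : α}
    (h : G.Reachable a b) (hne : a ≠ b) : ∃ c, G.Adj a c := by
  obtain ⟨w⟩ := h
  cases w with
  | nil => exact absurd rfl hne
  | cons h' _ => exact ⟨_, h'⟩

lemma reach_proj {V W : Type*} (G₁ : SimpleGraph V) (G₂ : SimpleGraph W) (U : Set V) :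
    ∀ (p q : ↥(U ×ˢ (Set.univ : Set W)))
      (_ : ((lexProd G₁ G₂).induce (U ×ˢ Set.univ)).Walk p q),
    (G₁.induce U).Reachable ⟨p.1.1, p.2.1⟩ ⟨q.1.1, q.2.1⟩ := by
  intro p q w
  induction w with
  | nil => exact SimpleGraph.Reachable.refl _
  | @cons u v _ h' p' ih =>
      rcases h' with h' | ⟨heq, -⟩
      · exact (SimpleGraph.Adj.reachable (by exact h' :
          (G₁.induce U).Adj ⟨u.1.1, u.2.1⟩ ⟨v.1.1, v.2.1⟩)).trans ih
      · have : (⟨u.1.1, u.2.1⟩ : ↥U) = ⟨v.1.1, v.2.1⟩ := Subtype.ext heq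
        rw [this]; exact ih

lemma lex_conn {V W : Type*} (G₁ : SimpleGraph V) (G₂ : SimpleGraph W) (T : Set (V × W))
    (hconn : (G₁.induce {x | ∀ y, (x, y) ∈ T}ᶜ).Connected)
    (hnbr : ∀ x ∉ {x | ∀ y, (x, y) ∈ T}, ∃ x' ∉ {x | ∀ y, (x, y) ∈ T}, G₁.Adj x x')
    (hne : Tᶜ.Nonempty) :
    ((lexProd G₁ G₂).induce Tᶜ).Connected := by
  set S₁ : Set V := {x | ∀ y, (x, y) ∈ T} with hS₁def
  have hfib : ∀ x, x ∉ S₁ → ∃ y, (x, y) ∉ T := by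
    intro x hx
    by_contra h
    push_neg at h
    exact hx h
  have key : ∀ (a b : ↥S₁ᶜ) (_ : (G₁.induce S₁ᶜ).Walk a b) (y y' : W)
      (hy : ((a : V), y) ∉ T) (hy' : ((b : V), y') ∉ T),
      ((lexProd G₁ G₂).induce Tᶜ).Reachable ⟨((a : V), y), hy⟩ ⟨((b : V), y'), hy'⟩ := by
    intro a b w
    induction w with
    | @nil a =>
        intro y y' hy hy'
        obtain ⟨x', hx', hadj⟩ := hnbr _ a.2
        obtain ⟨y'', hy''⟩ := hfib x' hx'
        have h1 : ((lexProd G₁ G₂).induce Tᶜ).Adj ⟨((a : V), y), hy⟩ ⟨(x', y''), hy''⟩ :=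
          Or.inl hadj
        have h2 : ((lexProd G₁ G₂).induce Tᶜ).Adj ⟨(x', y''), hy''⟩ ⟨((a : V), y'), hy'⟩ :=
          Or.inl hadj.symm
        exact h1.reachable.trans h2.reachable
    | @cons u v _ h' p ih =>
        intro y y' hy hy'
        obtain ⟨yv, hyv⟩ := hfib _ v.2
        have h1 : ((lexProd G₁ G₂).induce Tᶜ).Adj ⟨((u : V), y), hy⟩ ⟨((v : V), yv), hyv⟩ :=
          Or.inl h'
        exact h1.reachable.trans (ih yv y' hyv hy')
  rw [SimpleGraph.connected_iff]
  constructor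
  · rintro ⟨⟨x, y⟩, hxy⟩ ⟨⟨x', y'⟩, hx'y'⟩
    have hx : x ∉ S₁ := fun h => hxy (h y)
    have hx' : x' ∉ S₁ := fun h => hx'y' (h y')
    obtain ⟨w⟩ := hconn.preconnected ⟨x, hx⟩ ⟨x', hx'⟩
    exact key ⟨x, hx⟩ ⟨x', hx'⟩ w y y' hxy hx'y'
  · exact hne.to_subtype


/-- κ(G₁∘G₂) = κ(G₁)·|V(G₂)| for connected non-complete G₁. -/
theorem connectivity_lexProd {V W : Type*} [Fintype V] [Fintype W] [Nonempty W]
    (G₁ : SimpleGraph V) (G₂ : SimpleGraph W)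
    (hconn : G₁.Connected) (hnc : G₁ ≠ ⊤) :
    graphConnectivity (lexProd G₁ G₂) = graphConnectivity G₁ * Fintype.card W := by
  classical
  set A := Fintype.card V with hA
  set B := Fintype.card W with hB
  set k := graphConnectivity G₁ with hk
  have hk2 : k = sInf {n | ∃ S : Set V, IsVertexCut G₁ S ∧ S.ncard = n} := hk
  -- a non-adjacent pair
  obtain ⟨u, w, huw, hnadj⟩ : ∃ u w, u ≠ w ∧ ¬ G₁.Adj u w := by
    by_contra h
    push_neg at h
    apply hnc
    ext a b
    simp only [SimpleGraph.top_adj]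
    exact ⟨fun h' => h'.ne, fun h' => h a b h'⟩
  -- the cut {u,w}ᶜ
  have notconn : ¬ (G₁.induce ({u, w} : Set V)).Connected := by
    intro hc
    have hre := hc.preconnected ⟨u, by simp⟩ ⟨w, by simp⟩
    obtain ⟨c, hadj⟩ := exists_adj_of_reachable hre
      (by simp only [ne_eq, Subtype.mk.injEq]; exact huw)
    have hc1 : (c : V) ∈ ({u, w} : Set V) := c.2
    have hadj' : G₁.Adj u (c : V) := hadj
    rcases hc1 with h | h
    · rw [h] at hadj'; exact G₁.irrefl hadj'
    · rw [h] at hadj'; exact hnadj hadj'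
  have hS₀cut : IsVertexCut G₁ ({u, w} : Set V)ᶜ := by
    left
    rw [compl_compl]
    exact ⟨⟨u, by simp⟩, notconn⟩
  have hS₀card : ({u, w} : Set V)ᶜ.ncard + 2 = A := by
    have h1 := ncard_add_ncard_compl ({u, w} : Set V)
    rw [ncard_pair huw, Nat.card_eq_fintype_card] at h1
    omega
  have hkA : k + 2 ≤ A := by
    have := Nat.sInf_le (s := {n | ∃ S : Set V, IsVertexCut G₁ S ∧ S.ncard = n})
      ⟨({u, w} : Set V)ᶜ, hS₀cut, rfl⟩
    rw [← hk2] at this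
    omega
  -- a minimum cut of G₁
  have hne₁ : {n | ∃ S : Set V, IsVertexCut G₁ S ∧ S.ncard = n}.Nonempty :=
    ⟨_, ({u, w} : Set V)ᶜ, hS₀cut, rfl⟩
  obtain ⟨S, hScut, hScard⟩ := Nat.sInf_mem hne₁
  rw [← hk2] at hScard
  have hsumS : S.ncard + Sᶜ.ncard = A := by
    rw [hA, ← Nat.card_eq_fintype_card]
    exact ncard_add_ncard_compl S
  obtain ⟨hSne, hSdisc⟩ : Sᶜ.Nonempty ∧ ¬ (G₁.induce Sᶜ).Connected := by
    rcases hScut with h | ⟨v, hv⟩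
    · exact h
    · exfalso
      rw [hv, ncard_singleton] at hsumS
      omega
  -- lift it to a cut of the lexicographic product
  have hT₀c : ((S ×ˢ (Set.univ : Set W))ᶜ : Set (V × W)) = Sᶜ ×ˢ Set.univ := by
    ext ⟨x, y⟩
    simp [Set.mem_prod]
  have hT₀cut : IsVertexCut (lexProd G₁ G₂) (S ×ˢ (Set.univ : Set W)) := by
    left
    rw [hT₀c]
    constructor
    · obtain ⟨v0, hv0⟩ := hSne
      exact ⟨(v0, Classical.arbitrary W), ⟨hv0, trivial⟩⟩
    · intro hc
      apply hSdisc
      rw [SimpleGraph.connected_iff]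
      constructor
      · rintro ⟨a, ha⟩ ⟨b, hb⟩
        obtain ⟨wk⟩ := hc.preconnected ⟨(a, Classical.arbitrary W), ⟨ha, trivial⟩⟩
          ⟨(b, Classical.arbitrary W), ⟨hb, trivial⟩⟩
        exact reach_proj G₁ G₂ Sᶜ _ _ wk
      · exact hSne.to_subtype
  have hT₀card : (S ×ˢ (Set.univ : Set W)).ncard = k * B := by
    rw [my_ncard_prod, hScard, ncard_univ, Nat.card_eq_fintype_card]
  have hle : graphConnectivity (lexProd G₁ G₂) ≤ k * B := by
    show sInf {n | ∃ T : Set (V × W), IsVertexCut (lexProd G₁ G₂) T ∧ T.ncard = n} ≤ k * B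
    exact Nat.sInf_le ⟨S ×ˢ (Set.univ : Set W), hT₀cut, hT₀card⟩
  -- lower bound
  have hge : k * B ≤ graphConnectivity (lexProd G₁ G₂) := by
    show k * B ≤ sInf {n | ∃ T : Set (V × W), IsVertexCut (lexProd G₁ G₂) T ∧ T.ncard = n}
    refine le_csInf ⟨k * B, S ×ˢ (Set.univ : Set W), hT₀cut, hT₀card⟩ ?_
    rintro n ⟨T, hTcut, rfl⟩
    by_contra hlt
    push_neg at hlt
    set S₁ : Set V := {x | ∀ y, (x, y) ∈ T} with hS₁def
    have hsub : S₁ ×ˢ (Set.univ : Set W) ⊆ T := by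
      rintro ⟨x, y⟩ ⟨hx, -⟩
      exact hx y
    have h1 : S₁.ncard * B ≤ T.ncard := by
      calc S₁.ncard * B = (S₁ ×ˢ (Set.univ : Set W)).ncard := by
            rw [my_ncard_prod, ncard_univ, Nat.card_eq_fintype_card]
        _ ≤ T.ncard := ncard_le_ncard hsub T.toFinite
    have hB1 : 1 ≤ B := Fintype.card_pos
    have hS₁k : S₁.ncard < k := by
      by_contra h
      push_neg at h
      have := Nat.mul_le_mul_right B h
      linarith
    have hS₁notcut : ¬ IsVertexCut G₁ S₁ := by
      intro h
      have := Nat.sInf_le (s := {n | ∃ S : Set V, IsVertexCut G₁ S ∧ S.ncard = n})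
        ⟨S₁, h, rfl⟩
      rw [← hk2] at this
      omega
    have hsum1 : S₁.ncard + S₁ᶜ.ncard = A := by
      rw [hA, ← Nat.card_eq_fintype_card]
      exact ncard_add_ncard_compl S₁
    have h2 : 1 < S₁ᶜ.ncard := by omega
    have hS₁ne : S₁ᶜ.Nonempty := (Set.ncard_pos (Set.toFinite _)).mp (by omega)
    have hconn2 : (G₁.induce S₁ᶜ).Connected := by
      rcases not_or.mp hS₁notcut with ⟨hA', -⟩
      by_contra h
      exact hA' ⟨hS₁ne, h⟩
    have hnbr : ∀ x ∉ S₁, ∃ x' ∉ S₁, G₁.Adj x x' := by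
      intro x hx
      obtain ⟨z, hz, hzx⟩ := Set.exists_ne_of_one_lt_ncard h2 x
      obtain ⟨c, hadj⟩ := exists_adj_of_reachable (hconn2.preconnected ⟨x, hx⟩ ⟨z, hz⟩)
        (by simp only [ne_eq, Subtype.mk.injEq]; exact fun hh => hzx hh.symm)
      exact ⟨c.1, c.2, hadj⟩
    have hsumT : T.ncard + Tᶜ.ncard = A * B := by
      rw [hA, hB, ← Nat.card_eq_fintype_card, ← Nat.card_eq_fintype_card, ← Nat.card_prod]
      exact ncard_add_ncard_compl T
    have hAB : k * B + 2 * B ≤ A * B := by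
      calc k * B + 2 * B = (k + 2) * B := (add_mul k 2 B).symm
        _ ≤ A * B := Nat.mul_le_mul_right B hkA
    have hTc2 : 2 ≤ Tᶜ.ncard := by
      have h2B : 2 ≤ 2 * B := by omega
      linarith
    have hTne : Tᶜ.Nonempty := (Set.ncard_pos (Set.toFinite _)).mp (by omega)
    have hlexconn := lex_conn G₁ G₂ T hconn2 hnbr hTne
    rcases hTcut with ⟨-, hd⟩ | ⟨v, hv⟩
    · exact hd hlexconn
    · rw [hv, ncard_singleton] at hTc2
      omega
  exact le_antisymm hle hge
end

section
/- Let G₁ be a finite connected graph that is not complete and let G₂ be a finite graph with at least one vertex. If k₁(G₁) = κ(G₁), i.e., some minimum vertex-cut of G₁ is also a k₁-vertex-cut, then k₁(G₁∘G₂) = κ(G₁∘G₂). -/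
-- AUX

lemma exists_adj_of_connected {α : Type*} {G : SimpleGraph α} (hc : G.Connected)
    {a b : α} (hab : a ≠ b) : ∃ c, G.Adj a c := by
  obtain ⟨w⟩ := hc.preconnected a b
  cases w with
  | nil => exact absurd rfl hab
  | cons h _ => exact ⟨_, h⟩

lemma proj_reachable {V W : Type*} (G₁ : SimpleGraph V) (G₂ : SimpleGraph W)
    {s : Set V} {t : Set (V × W)} (hts : ∀ p ∈ t, p.1 ∈ s)
    {p q : ↥t} (w : ((lexProd G₁ G₂).induce t).Walk p q) :
    (G₁.induce s).Reachable ⟨p.1.1, hts _ p.2⟩ ⟨q.1.1, hts _ q.2⟩ := by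
  induction w with
  | nil => exact SimpleGraph.Reachable.refl _
  | @cons u x v h w ih =>
    have h' : (lexProd G₁ G₂).Adj u.1 x.1 := h
    rcases h' with h' | ⟨heq, -⟩
    · have ha : (G₁.induce s).Adj ⟨u.1.1, hts _ u.2⟩ ⟨x.1.1, hts _ x.2⟩ := h'
      exact ha.reachable.trans ih
    · have hh : (⟨u.1.1, hts _ u.2⟩ : ↥s) = ⟨x.1.1, hts _ x.2⟩ := Subtype.ext heq
      rw [hh]; exact ih

lemma lift_connected {V W : Type*} (G₁ : SimpleGraph V) (G₂ : SimpleGraph W)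
    {s : Set V} {t : Set (V × W)}
    (h1 : ∀ p ∈ t, p.1 ∈ s) (h2 : ∀ x ∈ s, ∃ w, (x, w) ∈ t)
    (hc : (G₁.induce s).Connected)
    (h2s : ∃ a ∈ s, ∃ b ∈ s, a ≠ b) :
    ((lexProd G₁ G₂).induce t).Connected := by
  obtain ⟨a₀, ha₀, b₀, hb₀, hab₀⟩ := h2s
  have hne : Nonempty ↥t := by
    obtain ⟨w, hw⟩ := h2 a₀ ha₀; exact ⟨⟨(a₀, w), hw⟩⟩
  have hnbr : ∀ x : ↥s, ∃ c : ↥s, (G₁.induce s).Adj x c := by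
    intro x
    rcases eq_or_ne x (⟨a₀, ha₀⟩ : ↥s) with rfl | hx
    · exact exists_adj_of_connected hc (b := ⟨b₀, hb₀⟩)
        (fun hh => hab₀ (Subtype.mk_eq_mk.mp hh))
    · exact exists_adj_of_connected hc hx
  have key : ∀ (x y : ↥s) (wk : (G₁.induce s).Walk x y) (w₁ w₂ : W)
      (hx : ((x : V), w₁) ∈ t) (hy : ((y : V), w₂) ∈ t),
      ((lexProd G₁ G₂).induce t).Reachable ⟨(x.1, w₁), hx⟩ ⟨(y.1, w₂), hy⟩ := by
    intro x y wk
    induction wk with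
    | nil =>
      intro w₁ w₂ hx hy
      rcases eq_or_ne w₁ w₂ with rfl | hw
      · exact SimpleGraph.Reachable.refl _
      · obtain ⟨c, hadj⟩ := hnbr _
        obtain ⟨u, hu⟩ := h2 c.1 c.2
        have had1 : ((lexProd G₁ G₂).induce t).Adj ⟨(_, w₁), hx⟩ ⟨(c.1, u), hu⟩ :=
          Or.inl hadj
        have had2 : ((lexProd G₁ G₂).induce t).Adj ⟨(c.1, u), hu⟩ ⟨(_, w₂), hy⟩ :=
          Or.inl hadj.symm
        exact had1.reachable.trans had2.reachable
    | @cons p c y hadj wk' ih =>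
      intro w₁ w₂ hx hy
      obtain ⟨u, hu⟩ := h2 c.1 c.2
      have had1 : ((lexProd G₁ G₂).induce t).Adj ⟨(p.1, w₁), hx⟩ ⟨(c.1, u), hu⟩ :=
        Or.inl hadj
      exact had1.reachable.trans (ih u w₂ hu hy)
  rw [SimpleGraph.connected_iff]
  refine ⟨?_, hne⟩
  rintro ⟨⟨a, w₁⟩, hat⟩ ⟨⟨b, w₂⟩, hbt⟩
  obtain ⟨wk⟩ := hc.preconnected ⟨a, h1 _ hat⟩ ⟨b, h1 _ hbt⟩
  exact key _ _ wk w₁ w₂ hat hbt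

lemma exists_nonadj {V : Type*} {G : SimpleGraph V} (hnc : G ≠ ⊤) :
    ∃ a b : V, a ≠ b ∧ ¬ G.Adj a b := by
  by_contra hcon
  push_neg at hcon
  apply hnc
  ext a b
  simp only [SimpleGraph.top_adj]
  exact ⟨fun h => h.ne, fun h => hcon a b h⟩

lemma kappa_le {V : Type*} [Fintype V] {G : SimpleGraph V} {a b : V}
    (hab : a ≠ b) (hnadj : ¬ G.Adj a b) :
    graphConnectivity G ≤ Fintype.card V - 2 := by
  have hbot : G.induce ({a, b} : Set V) = ⊥ := by
    ext x y
    simp only [SimpleGraph.comap_adj, SimpleGraph.bot_adj, iff_false]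
    intro hadj
    have hx := x.2
    have hy := y.2
    simp only [Set.mem_insert_iff, Set.mem_singleton_iff] at hx hy
    have hadj' : G.Adj x.1 y.1 := hadj
    rcases hx with hx | hx <;> rcases hy with hy | hy <;>
      rw [hx, hy] at hadj'
    · exact G.irrefl hadj'
    · exact hnadj hadj'
    · exact hnadj hadj'.symm
    · exact G.irrefl hadj'
  have hcut : IsVertexCut G ({a, b} : Set V)ᶜ := by
    left
    rw [compl_compl]
    refine ⟨⟨a, by simp⟩, ?_⟩
    intro hcon
    have hr := hcon.preconnected ⟨a, by simp⟩ ⟨b, by simp⟩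
    rw [hbot, SimpleGraph.reachable_bot, Subtype.mk_eq_mk] at hr
    exact hab hr
  have hcard : (({a, b} : Set V)ᶜ).ncard = Fintype.card V - 2 := by
    have h2 : ({a, b} : Set V).ncard = 2 := Set.ncard_pair hab
    have hc := Set.ncard_add_ncard_compl ({a, b} : Set V)
    rw [Nat.card_eq_fintype_card, h2] at hc
    omega
  exact Nat.sInf_le ⟨_, hcut, hcard⟩

lemma ncard_preimage_fst {V W : Type*} [Fintype V] [Fintype W] (S : Set V) :
    (Prod.fst ⁻¹' S : Set (V × W)).ncard = S.ncard * Fintype.card W := by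
  have h1 : (Prod.fst ⁻¹' S : Set (V × W)) = S ×ˢ Set.univ := by
    ext ⟨a, b⟩; simp
  rw [h1, ← Nat.card_coe_set_eq, Nat.card_congr (Equiv.Set.prod S Set.univ),
    Nat.card_prod, Nat.card_coe_set_eq, Nat.card_coe_set_eq, Set.ncard_univ,
    Nat.card_eq_fintype_card]

lemma preimage_cut {V W : Type*} [Nonempty W] (G₁ : SimpleGraph V) (G₂ : SimpleGraph W)
    {S : Set V} (hne : Sᶜ.Nonempty) (hdisc : ¬ (G₁.induce Sᶜ).Connected) :
    IsVertexCut (lexProd G₁ G₂) (Prod.fst ⁻¹' S) := by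
  left
  constructor
  · obtain ⟨a, ha⟩ := hne
    exact ⟨(a, Classical.arbitrary W), ha⟩
  · intro hcon
    have hpre : ¬ (G₁.induce Sᶜ).Preconnected := by
      intro hp
      haveI := hne.to_subtype
      exact hdisc ⟨hp⟩
    rw [SimpleGraph.Preconnected] at hpre
    push_neg at hpre
    obtain ⟨u, v, hnr⟩ := hpre
    apply hnr
    obtain ⟨wk⟩ := hcon.preconnected ⟨(u.1, Classical.arbitrary W), u.2⟩
      ⟨(v.1, Classical.arbitrary W), v.2⟩
    exact proj_reachable G₁ G₂ (s := Sᶜ) (fun p hp => hp) wk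

lemma kappa_lex_lower {V W : Type*} [Fintype V] [Fintype W] [Nonempty W]
    (G₁ : SimpleGraph V) (G₂ : SimpleGraph W)
    (T : Set (V × W)) (hT : IsVertexCut (lexProd G₁ G₂) T) :
    graphConnectivity G₁ * Fintype.card W ≤ T.ncard := by
  by_contra hlt
  push_neg at hlt
  set A : Set V := {x | ∀ w, (x, w) ∈ T} with hA
  have hsub : Prod.fst ⁻¹' A ⊆ T := fun p hp => hp p.2
  have hcard : A.ncard * Fintype.card W ≤ T.ncard := by
    rw [← ncard_preimage_fst (W := W) A]
    exact Set.ncard_le_ncard hsub T.toFinite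
  have hAlt : A.ncard < graphConnectivity G₁ := by
    by_contra hge
    push_neg at hge
    exact absurd (le_trans (Nat.mul_le_mul_right _ hge) hcard) (not_le.mpr hlt)
  have hAnc : ¬ IsVertexCut G₁ A := by
    intro hcut
    have hmem : A.ncard ∈ {n | ∃ S : Set V, IsVertexCut G₁ S ∧ S.ncard = n} := ⟨A, hcut, rfl⟩
    exact absurd (Nat.sInf_le hmem) (not_le.mpr hAlt)
  have hTc : Tᶜ.Nonempty := by
    rcases hT with ⟨h1, -⟩ | ⟨v, hv⟩
    · exact h1
    · exact ⟨v, by rw [hv]; exact rfl⟩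
  obtain ⟨⟨a, w₀⟩, haT⟩ := hTc
  have haA : a ∈ Aᶜ := fun hx => haT (hx w₀)
  rw [IsVertexCut] at hAnc
  push_neg at hAnc
  obtain ⟨hAnc1, hAnc2⟩ := hAnc
  have hconnA : (G₁.induce Aᶜ).Connected := hAnc1 ⟨a, haA⟩
  have htwo : ∃ b ∈ Aᶜ, b ≠ a := by
    by_contra hb
    push_neg at hb
    exact hAnc2 a (Set.eq_singleton_iff_unique_mem.mpr ⟨haA, hb⟩)
  obtain ⟨b, hbA, hba⟩ := htwo
  have hfib : ∀ x ∈ Aᶜ, ∃ w, (x, w) ∈ Tᶜ := by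
    intro x hx
    by_contra hcon
    push_neg at hcon
    exact hx (fun w => not_not.mp (hcon w))
  have hconnT : ((lexProd G₁ G₂).induce Tᶜ).Connected := by
    apply lift_connected G₁ G₂ (s := Aᶜ)
    · intro p hp hpA; exact hp (hpA p.2)
    · exact hfib
    · exact hconnA
    · exact ⟨a, haA, b, hbA, hba.symm⟩
  rcases hT with ⟨-, hd⟩ | ⟨v, hv⟩
  · exact hd hconnT
  · obtain ⟨w', hw'⟩ := hfib b hbA
    have h1 : ((a, w₀) : V × W) = v := by
      rw [← Set.mem_singleton_iff, ← hv]; exact haT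
    have h2 : ((b, w') : V × W) = v := by
      rw [← Set.mem_singleton_iff, ← hv]; exact hw'
    rw [← h1] at h2
    exact hba (congrArg Prod.fst h2)


/-- If k₁(G₁) = κ(G₁) then k₁(G₁∘G₂) = κ(G₁∘G₂). -/
theorem k1_lexProd_of_k1_eq_kappa {V W : Type*} [Fintype V] [Fintype W] [Nonempty W]
    (G₁ : SimpleGraph V) (G₂ : SimpleGraph W)
    (hconn : G₁.Connected) (hnc : G₁ ≠ ⊤)
    (h : k1Connectivity G₁ = (graphConnectivity G₁ : ℕ∞)) :
    k1Connectivity (lexProd G₁ G₂) = (graphConnectivity (lexProd G₁ G₂) : ℕ∞) := by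
  classical
  obtain ⟨a, b, hab, hnadj⟩ := exists_nonadj hnc
  have hVcard : 2 ≤ Fintype.card V := Fintype.one_lt_card_iff.mpr ⟨a, b, hab⟩
  have hκle : graphConnectivity G₁ ≤ Fintype.card V - 2 := kappa_le hab hnadj
  have hex : ∃ S : Set V, IsK1VertexCut G₁ S ∧ S.ncard ≤ graphConnectivity G₁ := by
    by_contra hcon
    push_neg at hcon
    have hge : ((graphConnectivity G₁ : ℕ∞) + 1) ≤ k1Connectivity G₁ := by
      apply le_sInf
      rintro n ⟨S, hS, rfl⟩
      have h1 : graphConnectivity G₁ < S.ncard := hcon S hS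
      exact_mod_cast Nat.succ_le_of_lt h1
    rw [h] at hge
    have hlt : (graphConnectivity G₁ : ℕ∞) < (graphConnectivity G₁ : ℕ∞) + 1 := by
      exact_mod_cast Nat.lt_succ_self _
    exact absurd hge (not_le.mpr hlt)
  obtain ⟨S, ⟨hScut, hSk1⟩, hSle⟩ := hex
  have hSc2 : 1 < Sᶜ.ncard := by
    have hc := Set.ncard_add_ncard_compl S
    rw [Nat.card_eq_fintype_card] at hc
    omega
  obtain ⟨a', ha', b', hb', hab'⟩ := (Set.one_lt_ncard Sᶜ.toFinite).mp hSc2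
  have hScne : Sᶜ.Nonempty := ⟨a', ha'⟩
  have hSdisc : ¬ (G₁.induce Sᶜ).Connected := by
    rcases hScut with ⟨-, hd⟩ | ⟨v, hv⟩
    · exact hd
    · rw [hv, Set.ncard_singleton] at hSc2; omega
  set t : Set (V × W) := Prod.fst ⁻¹' S with ht
  have htcut : IsVertexCut (lexProd G₁ G₂) t := preimage_cut G₁ G₂ hScne hSdisc
  have htk1 : IsK1VertexCut (lexProd G₁ G₂) t := by
    refine ⟨htcut, ?_⟩
    rintro ⟨x, w⟩ hxt
    obtain ⟨c, hc, hadj⟩ := hSk1 x hxt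
    exact ⟨(c, w), hc, Or.inl hadj⟩
  have htcard : t.ncard = S.ncard * Fintype.card W := ncard_preimage_fst S
  have hlexge : graphConnectivity G₁ * Fintype.card W ≤ graphConnectivity (lexProd G₁ G₂) := by
    have hmem : t.ncard ∈ {n | ∃ T : Set (V × W), IsVertexCut (lexProd G₁ G₂) T ∧ T.ncard = n} :=
      ⟨t, htcut, rfl⟩
    apply le_csInf ⟨t.ncard, hmem⟩
    rintro n ⟨T, hT, rfl⟩
    exact kappa_lex_lower G₁ G₂ T hT
  apply le_antisymm
  · calc k1Connectivity (lexProd G₁ G₂) ≤ (t.ncard : ℕ∞) := sInf_le ⟨t, htk1, rfl⟩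
      _ ≤ (graphConnectivity (lexProd G₁ G₂) : ℕ∞) := by
          have : t.ncard ≤ graphConnectivity (lexProd G₁ G₂) := by
            calc t.ncard = S.ncard * Fintype.card W := htcard
              _ ≤ graphConnectivity G₁ * Fintype.card W := Nat.mul_le_mul_right _ hSle
              _ ≤ graphConnectivity (lexProd G₁ G₂) := hlexge
          exact_mod_cast this
  · apply le_sInf
    rintro n ⟨T, hT, rfl⟩
    have hmem : T.ncard ∈ {n | ∃ T' : Set (V × W), IsVertexCut (lexProd G₁ G₂) T' ∧ T'.ncard = n} :=
      ⟨T, hT.1, rfl⟩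
    exact_mod_cast Nat.sInf_le hmem
end

section
/- Let G₁ be a finite connected graph that is not complete and let G₂ be a finite graph with at least one vertex. If k₁(G₁) = ∞ and G₂ has no isolated vertices (|V₀(G₂)| = 0), then k₁(G₁∘G₂) = κ(G₁∘G₂). -/
open Set

/-- If `v ∈ Sᶜ` has no neighbours in `Sᶜ` and `Sᶜ` has another vertex, the induced
graph on `Sᶜ` is disconnected. -/
lemma aux_not_connected_of_isolated {V : Type*} (G : SimpleGraph V) (S : Set V)
    (v : V) (hv : v ∈ Sᶜ) (hisov : ∀ w ∈ Sᶜ, ¬ G.Adj v w)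
    (u : V) (hu : u ∈ Sᶜ) (huv : u ≠ v) : ¬ (G.induce Sᶜ).Connected := by
  intro hc
  have key : ∀ (p q : ↥Sᶜ), (G.induce Sᶜ).Reachable p q → p.1 = v → q.1 = v := by
    intro p q hr
    obtain ⟨w⟩ := hr
    induction w with
    | nil => exact fun h => h
    | cons h _ ih =>
      intro hp
      rename_i c _ _
      exact absurd (hp ▸ h) (hisov c.1 c.2)
  exact huv (key ⟨v, hv⟩ ⟨u, hu⟩ (hc.preconnected _ _) rfl)

/-- The neighbourhood of any vertex is a vertex cut (when there are ≥ 2 vertices,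
which follows from having some other vertex). In fact always, given `Nontrivial V`
replaced by explicit data. -/
lemma aux_neighborSet_cut {V : Type*} [Fintype V] (G : SimpleGraph V)
    (x : V) (z : V) (hz : z ≠ x) : IsVertexCut G (G.neighborSet x) := by
  classical
  by_cases h : (G.neighborSet x)ᶜ = {x}
  · exact Or.inr ⟨x, h⟩
  · left
    have hx : x ∈ (G.neighborSet x)ᶜ := by
      simp [SimpleGraph.neighborSet]
    constructor
    · exact ⟨x, hx⟩
    · have : ∃ u, u ∈ (G.neighborSet x)ᶜ ∧ u ≠ x := by
        by_contra hh
        push_neg at hh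
        apply h
        ext w
        constructor
        · intro hw; exact hh w hw
        · intro hw
          rw [Set.mem_singleton_iff] at hw
          subst hw; exact hx
      obtain ⟨u, hu, hux⟩ := this
      exact aux_not_connected_of_isolated G _ x hx
        (fun w hw hadj => hw hadj) u hu hux

lemma aux_kappa_le_degree {V : Type*} [Fintype V] (G : SimpleGraph V)
    (x : V) (z : V) (hz : z ≠ x) :
    graphConnectivity G ≤ (G.neighborSet x).ncard :=
  Nat.sInf_le ⟨G.neighborSet x, aux_neighborSet_cut G x z hz, rfl⟩


lemma lexProd_adj {V W : Type*} (G : SimpleGraph V) (H : SimpleGraph W) (p q : V × W) :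
    (lexProd G H).Adj p q ↔ (G.Adj p.1 q.1 ∨ (p.1 = q.1 ∧ H.Adj p.2 q.2)) := Iff.rfl

lemma aux_ncard_prod {α β : Type*} (s : Set α) (t : Set β) :
    (s ×ˢ t).ncard = s.ncard * t.ncard := by
  have h := Nat.card_congr (Equiv.Set.prod s t)
  rw [Nat.card_prod] at h
  simpa [Nat.card_coe_set_eq] using h

lemma aux_proj_reachable {V W : Type*} (G₁ : SimpleGraph V) (G₂ : SimpleGraph W) (T : Set V) :
    ∀ (P Q : ↥(Tᶜ ×ˢ (Set.univ : Set W)))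
      (_ : ((lexProd G₁ G₂).induce (Tᶜ ×ˢ (Set.univ : Set W))).Walk P Q)
      (p q : ↥Tᶜ), p.1 = P.1.1 → q.1 = Q.1.1 → (G₁.induce Tᶜ).Reachable p q := by
  intro P Q w
  induction w with
  | nil =>
    intro p q hp hq
    have : p = q := Subtype.ext (hp.trans hq.symm)
    rw [this]
  | @cons u c Q' h w' ih =>
    intro p q hp hq
    have h' : (lexProd G₁ G₂).Adj u.1 c.1 := h
    have hc1 : c.1.1 ∈ Tᶜ := c.2.1
    rcases (lexProd_adj G₁ G₂ u.1 c.1).mp h' with h1 | ⟨heq, -⟩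
    · have step : (G₁.induce Tᶜ).Adj p ⟨c.1.1, hc1⟩ := by
        show G₁.Adj p.1 c.1.1
        rw [hp]; exact h1
      exact step.reachable.trans (ih ⟨c.1.1, hc1⟩ q rfl hq)
    · exact ih p q (by rw [hp, heq]) hq

/-- If k₁(G₁) = ∞ and G₂ has no isolated vertices, then k₁(G₁∘G₂) = κ(G₁∘G₂). -/
theorem k1_lexProd_eq_kappa_of_k1_top {V W : Type*} [Fintype V] [Fintype W] [Nonempty W]
    (G₁ : SimpleGraph V) (G₂ : SimpleGraph W)
    (hconn : G₁.Connected) (hnc : G₁ ≠ ⊤)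
    (hinf : k1Connectivity G₁ = ⊤) (hiso : isoSet G₂ = ∅) :
    k1Connectivity (lexProd G₁ G₂) = (graphConnectivity (lexProd G₁ G₂) : ℕ∞) := by
  classical
  set L := lexProd G₁ G₂ with hL
  -- two nonadjacent distinct vertices in G₁
  obtain ⟨a, b, hab, hnadj⟩ : ∃ a b : V, a ≠ b ∧ ¬ G₁.Adj a b := by
    by_contra h
    push_neg at h
    exact hnc (by ext u v; simp only [SimpleGraph.top_adj]
                  exact ⟨fun hadj => hadj.ne, fun hne => h u v hne⟩)
  -- the cut set for κ(G₁) is nonempty: {a,b}ᶜ is a cut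
  have hcc : (({a, b} : Set V)ᶜ)ᶜ = {a, b} := compl_compl _
  have hcutab : IsVertexCut G₁ ({a, b} : Set V)ᶜ := by
    left
    refine ⟨?_, ?_⟩
    · rw [hcc]; exact ⟨a, by simp⟩
    · refine aux_not_connected_of_isolated G₁ _ a (by rw [hcc]; simp) ?_ b
        (by rw [hcc]; simp) (Ne.symm hab)
      intro w hw hadj
      rw [hcc] at hw
      simp only [Set.mem_insert_iff, Set.mem_singleton_iff] at hw
      rcases hw with h | h
      · rw [h] at hadj; exact G₁.loopless.irrefl a hadj
      · rw [h] at hadj; exact hnadj hadj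
  -- G₂ has no isolated vertices
  have hG2 : ∀ y : W, ∃ y', G₂.Adj y y' := by
    intro y
    by_contra h
    push_neg at h
    have : y ∈ isoSet G₂ := h
    rw [hiso] at this
    exact this
  -- κ(G₁) ≤ (neighborSet x).ncard for every x
  have hkd : ∀ x : V, graphConnectivity G₁ ≤ (G₁.neighborSet x).ncard := by
    intro x
    by_cases hxa : x = a
    · exact aux_kappa_le_degree G₁ x b (by rw [hxa]; exact (Ne.symm hab))
    · exact aux_kappa_le_degree G₁ x a (Ne.symm hxa)
  -- a minimum cut T of G₁
  have hne₁ : {n | ∃ S : Set V, IsVertexCut G₁ S ∧ S.ncard = n}.Nonempty :=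
    ⟨_, _, hcutab, rfl⟩
  obtain ⟨T, hTcut, hTcard₀⟩ := Nat.sInf_mem hne₁
  have hTcard : T.ncard = graphConnectivity G₁ := hTcard₀
  -- T is a type-1 cut: since κ(G₁) ≤ |V| - 2 < |V| - 1
  have hcard2 : 2 ≤ Fintype.card V := Fintype.one_lt_card_iff.2 ⟨a, b, hab⟩
  have hkle : graphConnectivity G₁ ≤ Fintype.card V - 2 := by
    have := Nat.sInf_le (show (({a,b} : Set V)ᶜ).ncard ∈
      {n | ∃ S : Set V, IsVertexCut G₁ S ∧ S.ncard = n} from ⟨({a, b} : Set V)ᶜ, hcutab, rfl⟩)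
    calc graphConnectivity G₁ ≤ (({a, b} : Set V)ᶜ).ncard := this
      _ = Fintype.card V - 2 := by
          have h1 := Set.ncard_add_ncard_compl ({a, b} : Set V)
          rw [Set.ncard_pair hab] at h1
          have h2 : Nat.card V = Fintype.card V := Nat.card_eq_fintype_card
          omega
  -- T is a type-1 cut
  have hTne : Tᶜ.Nonempty ∧ ¬ (G₁.induce Tᶜ).Connected := by
    rcases hTcut with h | ⟨v, hv⟩
    · exact h
    · exfalso
      have h1 := Set.ncard_add_ncard_compl T
      rw [hv, Set.ncard_singleton] at h1
      have h2 : Nat.card V = Fintype.card V := Nat.card_eq_fintype_card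
      have h3 : T.ncard ≤ Fintype.card V - 2 := hTcard ▸ hkle
      omega
  -- the product cut T ×ˢ univ
  set u := (Set.univ : Set W).ncard with hu
  have hTuC : (T ×ˢ (Set.univ : Set W))ᶜ = Tᶜ ×ˢ (Set.univ : Set W) := by
    ext p
    simp [Set.mem_prod]
  have hTucut : IsVertexCut L (T ×ˢ (Set.univ : Set W)) := by
    left
    rw [hTuC]
    constructor
    · obtain ⟨v, hv⟩ := hTne.1
      exact ⟨(v, Classical.arbitrary W), hv, trivial⟩
    · intro hc
      apply hTne.2
      have hne : Nonempty ↥Tᶜ := hTne.1.to_subtype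
      constructor
      intro p q
      obtain ⟨wk⟩ := hc.preconnected ⟨(p.1, Classical.arbitrary W), p.2, trivial⟩
        ⟨(q.1, Classical.arbitrary W), q.2, trivial⟩
      exact aux_proj_reachable G₁ G₂ T _ _ wk p q rfl rfl
  have hkLle : graphConnectivity L ≤ graphConnectivity G₁ * u := by
    have := Nat.sInf_le (show (T ×ˢ (Set.univ : Set W)).ncard ∈
      {n | ∃ S : Set (V × W), IsVertexCut L S ∧ S.ncard = n} from ⟨_, hTucut, rfl⟩)
    rw [aux_ncard_prod, hTcard] at this
    exact this
  -- a minimum cut S of L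
  obtain ⟨S, hScut, hScard₀⟩ := Nat.sInf_mem
    (⟨_, _, hTucut, rfl⟩ : {n | ∃ S : Set (V × W), IsVertexCut L S ∧ S.ncard = n}.Nonempty)
  have hScard : S.ncard = graphConnectivity L := hScard₀
  -- S is a k₁-cut
  have hSk1 : ∀ p ∉ S, ∃ q ∉ S, L.Adj p q := by
    rintro ⟨x, y⟩ hpS
    by_contra hcon
    push_neg at hcon
    -- all neighbours of (x,y) lie in S
    have hAsub : (G₁.neighborSet x) ×ˢ (Set.univ : Set W) ⊆ S := by
      rintro ⟨x', y'⟩ ⟨hx', -⟩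
      by_contra hmem
      exact hcon (x', y') hmem (Or.inl hx')
    have hBsub : ({x} : Set V) ×ˢ (G₂.neighborSet y) ⊆ S := by
      rintro ⟨x', y'⟩ ⟨hx', hy'⟩
      by_contra hmem
      rw [Set.mem_singleton_iff] at hx'
      exact hcon (x', y') hmem (Or.inr ⟨hx'.symm, hy'⟩)
    have hdisj : Disjoint ((G₁.neighborSet x) ×ˢ (Set.univ : Set W))
        (({x} : Set V) ×ˢ (G₂.neighborSet y)) := by
      rw [Set.disjoint_left]
      rintro ⟨x', y'⟩ ⟨hx', -⟩ ⟨hx'', -⟩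
      rw [Set.mem_singleton_iff] at hx''
      rw [hx''] at hx'
      exact G₁.loopless.irrefl x hx'
    have hunion : ((G₁.neighborSet x) ×ˢ (Set.univ : Set W)) ∪
        (({x} : Set V) ×ˢ (G₂.neighborSet y)) ⊆ S := Set.union_subset hAsub hBsub
    have hcount : (G₁.neighborSet x).ncard * u + (G₂.neighborSet y).ncard ≤ S.ncard := by
      calc (G₁.neighborSet x).ncard * u + (G₂.neighborSet y).ncard
          = ((G₁.neighborSet x) ×ˢ (Set.univ : Set W)).ncard +
            (({x} : Set V) ×ˢ (G₂.neighborSet y)).ncard := by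
            rw [aux_ncard_prod, aux_ncard_prod, Set.ncard_singleton, one_mul]
        _ = (((G₁.neighborSet x) ×ˢ (Set.univ : Set W)) ∪
            (({x} : Set V) ×ˢ (G₂.neighborSet y))).ncard :=
            (Set.ncard_union_eq hdisj (Set.toFinite _) (Set.toFinite _)).symm
        _ ≤ S.ncard := Set.ncard_le_ncard hunion (Set.toFinite _)
    have hd2 : 1 ≤ (G₂.neighborSet y).ncard := by
      obtain ⟨y', hy'⟩ := hG2 y
      exact (Set.ncard_pos (Set.toFinite _)).2 ⟨y', hy'⟩
    have hd1 : graphConnectivity G₁ * u ≤ (G₁.neighborSet x).ncard * u :=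
      Nat.mul_le_mul_right u (hkd x)
    rw [hScard] at hcount
    have hkLle' := hkLle
    omega
  -- conclude
  apply le_antisymm
  · exact sInf_le ⟨S, ⟨hScut, hSk1⟩, by rw [hScard]⟩
  · refine le_sInf ?_
    rintro n ⟨S', ⟨hcut', -⟩, rfl⟩
    exact_mod_cast Nat.sInf_le (show S'.ncard ∈
      {n | ∃ S : Set (V × W), IsVertexCut L S ∧ S.ncard = n} from ⟨S', hcut', rfl⟩)
end
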